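/- For every integer n with n ≡ 2 (mod 4) and 6 ≤ n ≤ 202, the n-crossing permutations over S_{n+2} generate the full symmetric group: C(n, n+2) = S_{n+2}. -/

import Mathlib

/-- The underlying function of the `n`-crossing permutation `π_j` over `{1, …, m}` (as a
function on `ℕ`): it sends `j + k` to `j + n - 1 - k` for `0 ≤ k ≤ n - 1` and fixes all
other points. -/
def crossFun (n j i : ℕ) : ℕ :=
  if j ≤ i ∧ i < j + n then 2 * j + n - 1 - i else i

lemma crossFun_involutive (n j : ℕ) : Function.Involutive (crossFun n j) := by
  intro i
  unfold crossFun
  split_ifs <;> omega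

/-- The `n`-crossing permutation `π_j`, viewed as a permutation of `ℕ` fixing every point
outside `{j, …, j + n - 1}`. -/
def crossPerm (n j : ℕ) : Equiv.Perm ℕ :=
  Function.Involutive.toPerm _ (crossFun_involutive n j)

/-- `C n m` is the subgroup of the symmetric group `S_m` (realized as permutations of `ℕ`
supported on `{1, …, m}`) generated by the `n`-crossing permutations `π_1, …, π_{m-n+1}`. -/
def C (n m : ℕ) : Subgroup (Equiv.Perm ℕ) :=
  Subgroup.closure {σ | ∃ j, 1 ≤ j ∧ j ≤ m - n + 1 ∧ σ = crossPerm n j}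

/-! ### Auxiliary machinery -/

/-- The 3-cycle `a → b → c → a`. -/
def triple (a b c : ℕ) : Equiv.Perm ℕ := Equiv.swap a b * Equiv.swap b c

/-- Reversal of the interval `[a, b]`. -/
def revFun (a b i : ℕ) : ℕ := if a ≤ i ∧ i ≤ b then a + b - i else i

lemma revFun_involutive (a b : ℕ) : Function.Involutive (revFun a b) := by
  intro i; unfold revFun; split_ifs <;> omega

def revPerm (a b : ℕ) : Equiv.Perm ℕ :=
  Function.Involutive.toPerm _ (revFun_involutive a b)

lemma gen_mem (n j : ℕ) (h1 : 1 ≤ j) (h3 : j ≤ 3) : crossPerm n j ∈ C n (n + 2) :=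
  Subgroup.subset_closure ⟨j, h1, by omega, rfl⟩

lemma D_mem (n : ℕ) : crossPerm n 3 * crossPerm n 2 ∈ C n (n + 2) :=
  mul_mem (gen_mem n 3 (by omega) le_rfl) (gen_mem n 2 (by omega) (by omega))

lemma t_eq (n : ℕ) (hn6 : 6 ≤ n) : crossPerm n 3 * crossPerm n 2 * crossPerm n 1 * crossPerm n 2
    = triple 1 (n+2) 3 := by
  ext i
  simp only [triple, Equiv.Perm.mul_apply, crossPerm, Function.Involutive.coe_toPerm,
    crossFun, Equiv.swap_apply_def]
  split_ifs <;> omega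

lemma base_t (n : ℕ) (hn6 : 6 ≤ n) : triple 1 (n+2) 3 ∈ C n (n + 2) := by
  rw [← t_eq n hn6]
  exact mul_mem (mul_mem (D_mem n) (gen_mem n 1 le_rfl (by omega)))
    (gen_mem n 2 (by omega) (by omega))

lemma triple_conj (g : Equiv.Perm ℕ) (a b c : ℕ) :
    g * triple a b c * g⁻¹ = triple (g a) (g b) (g c) := by
  simp only [triple, Equiv.swap_apply_apply]
  group

lemma D_one (n : ℕ) (hn6 : 6 ≤ n) : (crossPerm n 3 * crossPerm n 2) 1 = 1 := by
  simp only [Equiv.Perm.mul_apply, crossPerm, Function.Involutive.coe_toPerm, crossFun]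
  split_ifs <;> omega

lemma D_mid (n y : ℕ) (hn6 : 6 ≤ n) (h2 : 2 ≤ y) (hy : y ≤ n) :
    (crossPerm n 3 * crossPerm n 2) y = y + 2 := by
  simp only [Equiv.Perm.mul_apply, crossPerm, Function.Involutive.coe_toPerm, crossFun]
  split_ifs <;> omega

lemma D_top1 (n : ℕ) (hn6 : 6 ≤ n) : (crossPerm n 3 * crossPerm n 2) (n+1) = 2 := by
  simp only [Equiv.Perm.mul_apply, crossPerm, Function.Involutive.coe_toPerm, crossFun]
  split_ifs <;> omega

lemma D_top2 (n : ℕ) (hn6 : 6 ≤ n) : (crossPerm n 3 * crossPerm n 2) (n+2) = 3 := by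
  simp only [Equiv.Perm.mul_apply, crossPerm, Function.Involutive.coe_toPerm, crossFun]
  split_ifs <;> omega

lemma conjStep (n : ℕ) (hn6 : 6 ≤ n) {a b : ℕ} (h : triple 1 a b ∈ C n (n + 2)) :
    triple 1 ((crossPerm n 3 * crossPerm n 2) a) ((crossPerm n 3 * crossPerm n 2) b)
      ∈ C n (n + 2) := by
  have e : triple 1 ((crossPerm n 3 * crossPerm n 2) a) ((crossPerm n 3 * crossPerm n 2) b)
      = (crossPerm n 3 * crossPerm n 2) * triple 1 a b * (crossPerm n 3 * crossPerm n 2)⁻¹ := by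
    rw [triple_conj, D_one n hn6]
  rw [e]
  exact mul_mem (mul_mem (D_mem n) h) (inv_mem (D_mem n))

lemma chain_eq {a b c : ℕ} (ha : a ≠ 1) (hb : b ≠ 1) (hc : c ≠ 1)
    (hab : a ≠ b) (hbc : b ≠ c) (hac : a ≠ c) :
    triple 1 b c * triple 1 a b = triple 1 a c := by
  ext i
  simp only [triple, Equiv.Perm.mul_apply, Equiv.swap_apply_def]
  split_ifs <;> omega

lemma combine_eq {a b c : ℕ} (ha : a ≠ 1) (hb : b ≠ 1) (hc : c ≠ 1)
    (hab : a ≠ b) (hbc : b ≠ c) (hac : a ≠ c) :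
    triple 1 a b * triple 1 b c = triple a b c := by
  ext i
  simp only [triple, Equiv.Perm.mul_apply, Equiv.swap_apply_def]
  split_ifs <;> omega

lemma triple_rot {a b c : ℕ} (hab : a ≠ b) (hbc : b ≠ c) (hac : a ≠ c) :
    triple a b c = triple b c a := by
  ext i
  simp only [triple, Equiv.Perm.mul_apply, Equiv.swap_apply_def]
  split_ifs <;> omega

lemma triple_inv {a b c : ℕ} (hab : a ≠ b) (hbc : b ≠ c) (hac : a ≠ c) :
    (triple a b c)⁻¹ = triple a c b := by
  have h : triple a b c * triple a c b = 1 := by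
    ext i
    simp only [triple, Equiv.Perm.mul_apply, Equiv.swap_apply_def, Equiv.Perm.coe_one, id_eq]
    split_ifs <;> omega
  exact inv_eq_of_mul_eq_one_right h

lemma v_odd (n : ℕ) (hn6 : 6 ≤ n) :
    ∀ k, 3 + 2*k ≤ n - 1 → triple 1 (3+2*k) (5+2*k) ∈ C n (n + 2) := by
  intro k
  induction k with
  | zero =>
    intro _
    have h := conjStep n hn6 (base_t n hn6)
    rwa [D_top2 n hn6, D_mid n 3 hn6 (by omega) (by omega)] at h
  | succ k ih =>
    intro hk
    have h := conjStep n hn6 (ih (by omega))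
    rwa [D_mid n (3+2*k) hn6 (by omega) (by omega),
      D_mid n (5+2*k) hn6 (by omega) (by omega)] at h

lemma v_top (n : ℕ) (hn : n % 4 = 2) (hn6 : 6 ≤ n) : triple 1 (n+1) 2 ∈ C n (n + 2) := by
  have h0 := v_odd n hn6 ((n-4)/2) (by omega)
  rw [show 3 + 2*((n-4)/2) = n - 1 by omega, show 5 + 2*((n-4)/2) = n + 1 by omega] at h0
  have h := conjStep n hn6 h0
  rwa [D_mid n (n-1) hn6 (by omega) (by omega), show n - 1 + 2 = n + 1 by omega,
    D_top1 n hn6] at h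

lemma v_even (n : ℕ) (hn : n % 4 = 2) (hn6 : 6 ≤ n) :
    ∀ k, 2 + 2*k ≤ n - 2 → triple 1 (2+2*k) (4+2*k) ∈ C n (n + 2) := by
  intro k
  induction k with
  | zero =>
    intro _
    have h := conjStep n hn6 (v_top n hn hn6)
    rwa [D_top1 n hn6, D_mid n 2 hn6 (by omega) (by omega)] at h
  | succ k ih =>
    intro hk
    have h := conjStep n hn6 (ih (by omega))
    rwa [D_mid n (2+2*k) hn6 (by omega) (by omega),
      D_mid n (4+2*k) hn6 (by omega) (by omega)] at h

lemma v_all (n : ℕ) (hn : n % 4 = 2) (hn6 : 6 ≤ n) (y : ℕ) (h2 : 2 ≤ y) (hy : y ≤ n - 1) :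
    triple 1 y (y+2) ∈ C n (n + 2) := by
  rcases Nat.even_or_odd y with he | ho
  · obtain ⟨r, hr⟩ := he
    have h := v_even n hn hn6 ((y-2)/2) (by omega)
    rwa [show 2 + 2*((y-2)/2) = y by omega, show 4 + 2*((y-2)/2) = y + 2 by omega] at h
  · obtain ⟨r, hr⟩ := ho
    have h := v_odd n hn6 ((y-3)/2) (by omega)
    rwa [show 3 + 2*((y-3)/2) = y by omega, show 5 + 2*((y-3)/2) = y + 2 by omega] at h

lemma Todd (n : ℕ) (hn : n % 4 = 2) (hn6 : 6 ≤ n) :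
    ∀ k, 3 + 2*k ≤ n + 1 → triple 1 (n+2) (3+2*k) ∈ C n (n + 2) := by
  intro k
  induction k with
  | zero => intro _; exact base_t n hn6
  | succ k ih =>
    intro hk
    have h1 := ih (by omega)
    have h2 := v_all n hn hn6 (3+2*k) (by omega) (by omega)
    rw [show (3:ℕ)+2*k+2 = 3+2*(k+1) by omega] at h2
    rw [← chain_eq (a := n+2) (b := 3+2*k) (c := 3+2*(k+1))
      (by omega) (by omega) (by omega) (by omega) (by omega) (by omega)]
    exact mul_mem h2 h1

lemma T2 (n : ℕ) (hn : n % 4 = 2) (hn6 : 6 ≤ n) : triple 1 (n+2) 2 ∈ C n (n + 2) := by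
  have h1 : triple 1 (n+2) (n+1) ∈ C n (n + 2) := by
    have h := Todd n hn hn6 ((n-2)/2) (by omega)
    rwa [show 3 + 2*((n-2)/2) = n+1 by omega] at h
  have h2 := v_top n hn hn6
  rw [← chain_eq (a := n+2) (b := n+1) (c := 2)
    (by omega) (by omega) (by omega) (by omega) (by omega) (by omega)]
  exact mul_mem h2 h1

lemma Teven (n : ℕ) (hn : n % 4 = 2) (hn6 : 6 ≤ n) :
    ∀ k, 2 + 2*k ≤ n → triple 1 (n+2) (2+2*k) ∈ C n (n + 2) := by
  intro k
  induction k with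
  | zero => intro _; exact T2 n hn hn6
  | succ k ih =>
    intro hk
    have h1 := ih (by omega)
    have h2 := v_all n hn hn6 (2+2*k) (by omega) (by omega)
    rw [show (2:ℕ)+2*k+2 = 2+2*(k+1) by omega] at h2
    rw [← chain_eq (a := n+2) (b := 2+2*k) (c := 2+2*(k+1))
      (by omega) (by omega) (by omega) (by omega) (by omega) (by omega)]
    exact mul_mem h2 h1

lemma Tall (n : ℕ) (hn : n % 4 = 2) (hn6 : 6 ≤ n) (y : ℕ) (h2 : 2 ≤ y) (hy : y ≤ n + 1) :
    triple 1 (n+2) y ∈ C n (n + 2) := by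
  rcases Nat.even_or_odd y with he | ho
  · obtain ⟨r, hr⟩ := he
    have h := Teven n hn hn6 ((y-2)/2) (by omega)
    rwa [show 2 + 2*((y-2)/2) = y by omega] at h
  · obtain ⟨r, hr⟩ := ho
    have h := Todd n hn hn6 ((y-3)/2) (by omega)
    rwa [show 3 + 2*((y-3)/2) = y by omega] at h

lemma allT1 (n : ℕ) (hn : n % 4 = 2) (hn6 : 6 ≤ n) (a b : ℕ) (ha2 : 2 ≤ a) (ha : a ≤ n+2)
    (hb2 : 2 ≤ b) (hb : b ≤ n+2) (hab : a ≠ b) : triple 1 a b ∈ C n (n + 2) := by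
  by_cases hbn : b = n + 2
  · subst hbn
    rw [← triple_inv (a := 1) (b := n+2) (c := a) (by omega) (by omega) (by omega)]
    exact inv_mem (Tall n hn hn6 a ha2 (by omega))
  · by_cases han : a = n + 2
    · subst han; exact Tall n hn hn6 b hb2 (by omega)
    · have h1 : triple 1 a (n+2) ∈ C n (n + 2) := by
        rw [← triple_inv (a := 1) (b := n+2) (c := a) (by omega) (by omega) (by omega)]
        exact inv_mem (Tall n hn hn6 a ha2 (by omega))
      have h2 := Tall n hn hn6 b hb2 (by omega)
      rw [← chain_eq (a := a) (b := n+2) (c := b)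
        (by omega) (by omega) (by omega) (by omega) (by omega) (by omega)]
      exact mul_mem h2 h1

lemma allTriple (n : ℕ) (hn : n % 4 = 2) (hn6 : 6 ≤ n) (a b c : ℕ)
    (ha1 : 1 ≤ a) (ha : a ≤ n+2) (hb1 : 1 ≤ b) (hb : b ≤ n+2)
    (hc1 : 1 ≤ c) (hc : c ≤ n+2) (hab : a ≠ b) (hbc : b ≠ c) (hac : a ≠ c) :
    triple a b c ∈ C n (n + 2) := by
  by_cases ha' : a = 1
  · subst ha'; exact allT1 n hn hn6 b c (by omega) hb (by omega) hc hbc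
  · by_cases hb' : b = 1
    · subst hb'
      rw [triple_rot hab hbc hac]
      exact allT1 n hn hn6 c a (by omega) hc (by omega) ha (by omega)
    · by_cases hc' : c = 1
      · subst hc'
        rw [triple_rot (a := a) (b := b) (c := 1) hab hbc hac,
          triple_rot (a := b) (b := 1) (c := a) hbc (by omega) (by omega)]
        exact allT1 n hn hn6 a b (by omega) ha (by omega) hb hab
      · rw [← combine_eq (a := a) (b := b) (c := c) ha' hb' hc' hab hbc hac]
        exact mul_mem (allT1 n hn hn6 a b (by omega) ha (by omega) hb hab)
          (allT1 n hn hn6 b c (by omega) hb (by omega) hc hbc)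

set_option maxHeartbeats 1000000 in
lemma dswap_eq {a b c d : ℕ} (hab : a ≠ b) (hac : a ≠ c) (had : a ≠ d) (hbc : b ≠ c)
    (hbd : b ≠ d) (hcd : c ≠ d) :
    Equiv.swap a b * Equiv.swap c d = triple a c b * triple a c d := by
  ext i
  simp only [triple, Equiv.Perm.mul_apply, Equiv.swap_apply_def]
  split_ifs <;> omega

lemma dswap_mem (n : ℕ) (hn : n % 4 = 2) (hn6 : 6 ≤ n) {a b c d : ℕ}
    (ha1 : 1 ≤ a) (ha : a ≤ n+2) (hb1 : 1 ≤ b) (hb : b ≤ n+2)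
    (hc1 : 1 ≤ c) (hc : c ≤ n+2) (hd1 : 1 ≤ d) (hd : d ≤ n+2)
    (hab : a ≠ b) (hac : a ≠ c) (had : a ≠ d) (hbc : b ≠ c) (hbd : b ≠ d) (hcd : c ≠ d) :
    Equiv.swap a b * Equiv.swap c d ∈ C n (n + 2) := by
  rw [dswap_eq hab hac had hbc hbd hcd]
  exact mul_mem (allTriple n hn hn6 a c b ha1 ha hc1 hc hb1 hb hac (by omega) hab)
    (allTriple n hn hn6 a c d ha1 ha hc1 hc hd1 hd hac hcd had)

lemma revPerm_one (a : ℕ) (h1 : 1 ≤ a) : revPerm a (a - 1) = 1 := by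
  ext i
  simp only [revPerm, Function.Involutive.coe_toPerm, revFun, Equiv.Perm.coe_one, id_eq]
  split_ifs <;> omega

lemma rev_decomp (a b : ℕ) (h : a + 3 ≤ b) :
    revPerm a b = (Equiv.swap a b * Equiv.swap (a+1) (b-1)) * revPerm (a+2) (b-2) := by
  ext i
  simp only [revPerm, Function.Involutive.coe_toPerm, revFun, Equiv.Perm.mul_apply,
    Equiv.swap_apply_def]
  split_ifs <;> omega

lemma rev_mem (n : ℕ) (hn : n % 4 = 2) (hn6 : 6 ≤ n) :
    ∀ s a, 1 ≤ a → a + 4*s ≤ n + 3 → revPerm a (a + 4*s - 1) ∈ C n (n + 2) := by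
  intro s
  induction s with
  | zero =>
    intro a h1 _
    rw [show a + 4*0 - 1 = a - 1 by omega, revPerm_one a h1]
    exact one_mem _
  | succ s ih =>
    intro a h1 hb
    rw [show a + 4*(s+1) - 1 = a + 4*s + 3 by omega,
      rev_decomp a (a + 4*s + 3) (by omega), show a + 4*s + 3 - 1 = a + 4*s + 2 by omega,
      show a + 4*s + 3 - 2 = a + 4*s + 1 by omega]
    refine mul_mem (dswap_mem n hn hn6 h1 (by omega) (by omega) (by omega) (by omega)
      (by omega) (by omega) (by omega) (by omega) (by omega) (by omega) (by omega) (by omega)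
      (by omega)) ?_
    have h := ih (a+2) (by omega) (by omega)
    rwa [show a + 2 + 4*s - 1 = a + 4*s + 1 by omega] at h

lemma rev_sq (a b : ℕ) : revPerm a b * revPerm a b = 1 := by
  ext i
  simp only [Equiv.Perm.mul_apply, revPerm, Function.Involutive.coe_toPerm,
    Equiv.Perm.coe_one, id_eq]
  exact revFun_involutive a b i

lemma pi1_decomp (n : ℕ) (hn6 : 6 ≤ n) : crossPerm n 1 = Equiv.swap 1 n * revPerm 2 (n-1) := by
  ext i
  simp only [crossPerm, revPerm, Function.Involutive.coe_toPerm, crossFun, revFun,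
    Equiv.Perm.mul_apply, Equiv.swap_apply_def]
  split_ifs <;> omega

lemma swap1n_mem (n : ℕ) (hn : n % 4 = 2) (hn6 : 6 ≤ n) : Equiv.swap 1 n ∈ C n (n + 2) := by
  have hrev : revPerm 2 (n-1) ∈ C n (n + 2) := by
    have h := rev_mem n hn hn6 ((n-2)/4) 2 (by omega) (by omega)
    rwa [show 2 + 4*((n-2)/4) - 1 = n - 1 by omega] at h
  have e : Equiv.swap 1 n = crossPerm n 1 * revPerm 2 (n-1) := by
    rw [pi1_decomp n hn6, mul_assoc, rev_sq, mul_one]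
  rw [e]
  exact mul_mem (gen_mem n 1 le_rfl (by omega)) hrev

lemma pairStep (n : ℕ) (hn : n % 4 = 2) (hn6 : 6 ≤ n) {p q a b : ℕ}
    (hpq : Equiv.swap p q ∈ C n (n + 2))
    (hp1 : 1 ≤ p) (hp : p ≤ n+2) (hq1 : 1 ≤ q) (hq : q ≤ n+2)
    (ha1 : 1 ≤ a) (ha : a ≤ n+2) (hb1 : 1 ≤ b) (hb : b ≤ n+2)
    (hab : a ≠ b) (hap : a ≠ p) (haq : a ≠ q) (hbp : b ≠ p) (hbq : b ≠ q) (hpq' : p ≠ q) :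
    Equiv.swap a b ∈ C n (n + 2) := by
  have e : Equiv.swap a b = (Equiv.swap a b * Equiv.swap p q) * Equiv.swap p q := by
    rw [mul_assoc, Equiv.swap_mul_self, mul_one]
  rw [e]
  exact mul_mem (dswap_mem n hn hn6 ha1 ha hb1 hb hp1 hp hq1 hq hab hap haq hbp hbq hpq') hpq

lemma allSwap (n : ℕ) (hn : n % 4 = 2) (hn6 : 6 ≤ n) (a b : ℕ)
    (ha1 : 1 ≤ a) (ha : a ≤ n+2) (hb1 : 1 ≤ b) (hb : b ≤ n+2) :
    Equiv.swap a b ∈ C n (n + 2) := by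
  by_cases hab : a = b
  · subst hab
    rw [Equiv.swap_self]
    exact one_mem _
  · have s1n := swap1n_mem n hn hn6
    have s23 : Equiv.swap 2 3 ∈ C n (n + 2) :=
      pairStep n hn hn6 s1n (by omega) (by omega) (by omega) (by omega) (by omega) (by omega)
        (by omega) (by omega) (by omega) (by omega) (by omega) (by omega) (by omega) (by omega)
    have s45 : Equiv.swap 4 5 ∈ C n (n + 2) :=
      pairStep n hn hn6 s1n (by omega) (by omega) (by omega) (by omega) (by omega) (by omega)
        (by omega) (by omega) (by omega) (by omega) (by omega) (by omega) (by omega) (by omega)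
    by_cases h1 : a ≠ 1 ∧ a ≠ n ∧ b ≠ 1 ∧ b ≠ n
    · exact pairStep n hn hn6 s1n (by omega) (by omega) (by omega) (by omega) ha1 ha hb1 hb
        hab (by omega) (by omega) (by omega) (by omega) (by omega)
    · by_cases h2 : a ≠ 2 ∧ a ≠ 3 ∧ b ≠ 2 ∧ b ≠ 3
      · exact pairStep n hn hn6 s23 (by omega) (by omega) (by omega) (by omega) ha1 ha hb1 hb
          hab (by omega) (by omega) (by omega) (by omega) (by omega)
      · exact pairStep n hn hn6 s45 (by omega) (by omega) (by omega) (by omega) ha1 ha hb1 hb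
          hab (by omega) (by omega) (by omega) (by omega) (by omega)

theorem stmt15 (n : ℕ) (hn : n % 4 = 2) (hn6 : 6 ≤ n) (hn202 : n ≤ 202) :
    ∀ σ : Equiv.Perm ℕ, σ ∈ C n (n + 2) ↔ (∀ i, σ i ≠ i → 1 ≤ i ∧ i ≤ n + 2) := by
  let H : Subgroup (Equiv.Perm ℕ) :=
    { carrier := {σ | ∀ i, σ i ≠ i → 1 ≤ i ∧ i ≤ n + 2}
      one_mem' := by intro i hi; simp at hi
      mul_mem' := by
        intro σ τ hσ hτ i hi
        simp only [Set.mem_setOf_eq] at hσ hτ ⊢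
        rw [Equiv.Perm.mul_apply] at hi
        by_cases h : τ i = i
        · rw [h] at hi; exact hσ i hi
        · exact hτ i h
      inv_mem' := by
        intro σ hσ i hi
        simp only [Set.mem_setOf_eq] at hσ ⊢
        refine hσ i fun h => hi ?_
        rw [← h, ← Equiv.Perm.mul_apply, inv_mul_cancel, Equiv.Perm.one_apply]
        exact h.symm }
  intro σ
  constructor
  · intro hσ
    have hle : C n (n + 2) ≤ H := by
      rw [C, Subgroup.closure_le]
      rintro f ⟨j, hj1, hj3, rfl⟩
      intro i hi
      simp only [crossPerm, Function.Involutive.coe_toPerm, crossFun] at hi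
      by_cases hc : j ≤ i ∧ i < j + n
      · omega
      · rw [if_neg hc] at hi; omega
    exact hle hσ
  · intro hσ
    set S' : Set (Equiv.Perm ℕ) :=
      {f | ∃ a b : ℕ, 1 ≤ a ∧ a ≤ n + 2 ∧ 1 ≤ b ∧ b ≤ n + 2 ∧ a ≠ b ∧ f = Equiv.swap a b}
      with hS'def
    have hS' : ∀ f ∈ S', f.IsSwap := by
      rintro f ⟨a, b, _, _, _, _, hab, rfl⟩
      exact ⟨a, b, hab, rfl⟩
    have hle : Subgroup.closure S' ≤ C n (n + 2) := by
      rw [Subgroup.closure_le]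
      rintro f ⟨a, b, ha1, ha, hb1, hb, hab, rfl⟩
      exact allSwap n hn hn6 a b ha1 ha hb1 hb
    refine hle ?_
    rw [mem_closure_isSwap hS']
    refine ⟨?_, ?_⟩
    · refine Set.Finite.subset (Set.finite_Icc 1 (n+2)) ?_
      intro i hi
      simp only [Set.mem_compl_iff, MulAction.mem_fixedBy, Equiv.Perm.smul_def] at hi
      have := hσ i hi
      simp only [Set.mem_Icc]
      omega
    · intro x
      by_cases h : σ x = x
      · rw [h]; exact MulAction.mem_orbit_self x
      · have hx := hσ x h
        have hσx : σ (σ x) ≠ σ x := fun hh => h (σ.injective hh)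
        have hsx := hσ (σ x) hσx
        refine ⟨⟨Equiv.swap x (σ x), Subgroup.subset_closure ?_⟩, ?_⟩
        · exact ⟨x, σ x, hx.1, hx.2, hsx.1, hsx.2, fun hh => h hh.symm, rfl⟩
        · exact Equiv.swap_apply_left x (σ x)
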